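/- arXiv:1407.4919 — 8 statements merged into one kernel-verified Lean document; each statement's English description precedes it below -/
import Mathlib

section
/- For all real x and all real ζ, |arctan( sin ζ / (cos ζ + e^{-x}) )| ≤ |ζ|, provided cos ζ + e^{-x} > 0. -/
open Real

lemma abs_arctan_eq (t : ℝ) : |Real.arctan t| = Real.arctan |t| := by
  rcases le_or_gt 0 t with ht | ht
  · rw [abs_of_nonneg ht, abs_of_nonneg]
    simpa using Real.arctan_strictMono.monotone ht
  · rw [abs_of_neg ht, abs_of_neg, ← Real.arctan_neg]
    simpa using Real.arctan_strictMono ht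

theorem abs_arctan_le (x ζ : ℝ) (h : Real.cos ζ + Real.exp (-x) > 0) :
    |Real.arctan (Real.sin ζ / (Real.cos ζ + Real.exp (-x)))| ≤ |ζ| := by
  rcases le_or_gt (π / 2) |ζ| with hz | hz
  · refine le_trans (le_of_lt ?_) hz
    rw [abs_lt]
    exact ⟨Real.neg_pi_div_two_lt_arctan _, Real.arctan_lt_pi_div_two _⟩
  · have h1 := (abs_lt.mp hz).1
    have h2 := (abs_lt.mp hz).2
    have hl : -(π/2) < ζ := by linarith [neg_abs_le ζ]
    have hr : ζ < π/2 := by linarith [le_abs_self ζ]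
    have hcos : 0 < Real.cos ζ := Real.cos_pos_of_mem_Ioo ⟨hl, hr⟩
    have hpi := Real.pi_pos
    have hsin : |Real.sin ζ| = Real.sin |ζ| := by
      rcases le_or_gt 0 ζ with hζ | hζ
      · rw [abs_of_nonneg hζ, abs_of_nonneg (Real.sin_nonneg_of_nonneg_of_le_pi hζ (by linarith))]
      · rw [abs_of_neg hζ, Real.sin_neg,
          abs_of_nonpos (by nlinarith [Real.sin_nonneg_of_nonneg_of_le_pi (show (0:ℝ) ≤ -ζ by linarith) (show -ζ ≤ π by linarith), Real.sin_neg ζ])]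
    rw [abs_arctan_eq, abs_div, abs_of_pos h]
    have hle : |Real.sin ζ| / (Real.cos ζ + Real.exp (-x)) ≤ Real.tan |ζ| := by
      rw [Real.tan_eq_sin_div_cos, ← hsin, Real.cos_abs]
      exact div_le_div_of_nonneg_left (abs_nonneg _) hcos (by linarith [Real.exp_pos (-x)])
    calc Real.arctan (|Real.sin ζ| / (Real.cos ζ + Real.exp (-x)))
        ≤ Real.arctan (Real.tan |ζ|) := Real.arctan_strictMono.monotone hle
      _ = |ζ| := Real.arctan_tan (by linarith [abs_nonneg ζ]) hz
end

section
/- For all real x ≤ 0 and all real ζ with |ζ| ≤ π/10, the quantity r_ζ(x) := (1/4)·ln²(1 + 2 e^{x} cos ζ + e^{2x}) − (arctan( sin ζ / (cos ζ + e^{-x}) ))² satisfies r_ζ(x) ≥ (1/8) e^{2x}. -/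
set_option maxHeartbeats 1000000

lemma abs_arctan_le_abs (u : ℝ) : |Real.arctan u| ≤ |u| := by
  have key : ∀ v : ℝ, 0 ≤ v → Real.arctan v ≤ v := by
    intro v hv
    have hnn : 0 ≤ Real.arctan v := by
      have := Real.arctan_strictMono.monotone hv
      rwa [Real.arctan_zero] at this
    have h1 : Real.arctan v ≤ Real.tan (Real.arctan v) :=
      Real.le_tan hnn (Real.arctan_lt_pi_div_two v)
    rwa [Real.tan_arctan] at h1
  rcases le_or_gt 0 u with hu | hu
  · have hnn : 0 ≤ Real.arctan u := by
      have := Real.arctan_strictMono.monotone hu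
      rwa [Real.arctan_zero] at this
    rw [abs_of_nonneg hu, abs_of_nonneg hnn]
    exact key u hu
  · have hneg : Real.arctan u < 0 := by
      have := Real.arctan_strictMono hu
      rwa [Real.arctan_zero] at this
    rw [abs_of_neg hu, abs_of_neg hneg]
    have := key (-u) (by linarith)
    rw [Real.arctan_neg] at this
    linarith

lemma log_one_add_ge_half (t : ℝ) (h0 : 0 ≤ t) (h1 : t ≤ 1) :
    t / 2 ≤ Real.log (1 + t) := by
  rw [Real.le_log_iff_exp_le (by linarith)]
  have h2 : Real.exp (-(t / 2)) ≥ 1 - t / 2 := by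
    have := Real.add_one_le_exp (-(t / 2)); linarith
  have h3 : 0 < 1 - t / 2 := by linarith
  have h4 : Real.exp (t / 2) ≤ 1 / (1 - t / 2) := by
    rw [le_div_iff₀ h3]
    have := Real.exp_pos (t / 2)
    calc Real.exp (t / 2) * (1 - t / 2) ≤ Real.exp (t / 2) * Real.exp (-(t / 2)) := by
          nlinarith
      _ = 1 := by rw [← Real.exp_add]; simp
  refine h4.trans ?_
  rw [div_le_iff₀ h3]
  nlinarith

theorem r_zeta_lower_bound_nonpos (x ζ : ℝ) (hx : x ≤ 0) (hζ : |ζ| ≤ Real.pi / 10) :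
    (1 / 4) * (Real.log (1 + 2 * Real.exp x * Real.cos ζ + Real.exp (2 * x))) ^ 2
      - (Real.arctan (Real.sin ζ / (Real.cos ζ + Real.exp (-x)))) ^ 2
      ≥ (1 / 8) * Real.exp (2 * x) := by
  have hpi : 3.14 ≤ Real.pi ∧ Real.pi ≤ 3.15 :=
    ⟨by linarith [Real.pi_gt_d6], by linarith [Real.pi_lt_d2]⟩
  have hζ2 : ζ ^ 2 ≤ (Real.pi / 10) ^ 2 := by
    rw [← sq_abs]; exact pow_le_pow_left₀ (abs_nonneg ζ) hζ 2
  have hζ2' : ζ ^ 2 ≤ 1 / 10 := by nlinarith [hpi.1, hpi.2]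
  -- cos ζ bounds
  have hcos_lb : 1 - ζ ^ 2 / 2 ≤ Real.cos ζ := Real.one_sub_sq_div_two_le_cos
  have hcpos : 0 < Real.cos ζ := by nlinarith
  have hcle : Real.cos ζ ≤ 1 := Real.cos_le_one ζ
  have hex : 0 < Real.exp x := Real.exp_pos x
  have hex1 : Real.exp x ≤ 1 := Real.exp_le_one_iff.mpr hx
  have he2x : Real.exp (2 * x) = Real.exp x * Real.exp x := by
    rw [two_mul, Real.exp_add]
  set t : ℝ := Real.exp x * Real.cos ζ with ht
  have ht0 : 0 ≤ t := by positivity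
  have ht1 : t ≤ 1 := by nlinarith
  -- log term
  have hA : (1 + t) ^ 2 ≤ 1 + 2 * Real.exp x * Real.cos ζ + Real.exp (2 * x) := by
    rw [he2x]; nlinarith [Real.cos_sq_le_one ζ, sq_nonneg (Real.cos ζ), sq_nonneg (Real.exp x)]
  have hApos : (0:ℝ) < (1 + t) ^ 2 := by positivity
  have hlog1 : Real.log ((1 + t) ^ 2) ≤
      Real.log (1 + 2 * Real.exp x * Real.cos ζ + Real.exp (2 * x)) :=
    Real.log_le_log hApos hA
  have hlog2 : Real.log ((1 + t) ^ 2) = 2 * Real.log (1 + t) := by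
    rw [Real.log_pow]; push_cast; ring
  have hlog3 : t / 2 ≤ Real.log (1 + t) := log_one_add_ge_half t ht0 ht1
  have hlogge : t ≤ Real.log (1 + 2 * Real.exp x * Real.cos ζ + Real.exp (2 * x)) := by
    rw [hlog2] at hlog1; linarith
  have hlogsq : t ^ 2 ≤ (Real.log (1 + 2 * Real.exp x * Real.cos ζ + Real.exp (2 * x))) ^ 2 := by
    have := hlogge
    nlinarith
  -- arctan term
  set s : ℝ := Real.sin ζ / (Real.cos ζ + Real.exp (-x)) with hs
  have hemx : 0 < Real.exp (-x) := Real.exp_pos _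
  have hden : 0 < Real.cos ζ + Real.exp (-x) := by linarith
  have hsabs : |s| ≤ |ζ| * Real.exp x := by
    rw [hs, abs_div, abs_of_pos hden]
    rw [div_le_iff₀ hden]
    have h1 : |Real.sin ζ| ≤ |ζ| := Real.abs_sin_le_abs
    have h2 : Real.exp (-x) ≤ Real.cos ζ + Real.exp (-x) := by linarith
    have h3 : Real.exp x * Real.exp (-x) = 1 := by
      rw [← Real.exp_add]; simp
    calc |Real.sin ζ| ≤ |ζ| := h1
      _ = |ζ| * Real.exp x * Real.exp (-x) := by rw [mul_assoc, h3, mul_one]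
      _ ≤ |ζ| * Real.exp x * (Real.cos ζ + Real.exp (-x)) := by
          have : 0 ≤ |ζ| * Real.exp x := by positivity
          nlinarith
  have harctan : |Real.arctan s| ≤ |ζ| * Real.exp x :=
    (abs_arctan_le_abs s).trans hsabs
  have harctansq : (Real.arctan s) ^ 2 ≤ ζ ^ 2 * Real.exp (2 * x) := by
    have h1 : (Real.arctan s) ^ 2 ≤ (|ζ| * Real.exp x) ^ 2 := by
      rw [← sq_abs (Real.arctan s)]
      exact pow_le_pow_left₀ (abs_nonneg _) harctan 2
    rw [he2x]
    calc (Real.arctan s) ^ 2 ≤ (|ζ| * Real.exp x) ^ 2 := h1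
      _ = ζ ^ 2 * (Real.exp x * Real.exp x) := by rw [mul_pow, sq_abs]; ring
  -- combine
  have hkey : Real.cos ζ ^ 2 / 4 - ζ ^ 2 ≥ 1 / 8 := by
    have hb : 0 ≤ 1 - ζ ^ 2 / 2 := by nlinarith [sq_nonneg ζ]
    have h1 : (1 - ζ ^ 2 / 2) ^ 2 ≤ Real.cos ζ ^ 2 := pow_le_pow_left₀ hb hcos_lb 2
    have h1' : 1 - ζ ^ 2 + (ζ ^ 2) ^ 2 / 4 ≤ Real.cos ζ ^ 2 := by nlinarith
    linarith [sq_nonneg (ζ ^ 2)]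
  have ht2 : t ^ 2 = Real.exp (2 * x) * Real.cos ζ ^ 2 := by
    rw [he2x, ht]; ring
  have hexp2 : 0 < Real.exp (2 * x) := Real.exp_pos _
  calc (1 / 4) * (Real.log (1 + 2 * Real.exp x * Real.cos ζ + Real.exp (2 * x))) ^ 2
        - (Real.arctan s) ^ 2
      ≥ (1 / 4) * t ^ 2 - ζ ^ 2 * Real.exp (2 * x) := by
        have h := hlogsq; have h2 := harctansq; linarith
    _ = Real.exp (2 * x) * (Real.cos ζ ^ 2 / 4 - ζ ^ 2) := by rw [ht2]; ring
    _ ≥ Real.exp (2 * x) * (1 / 8) := by nlinarith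
    _ = (1 / 8) * Real.exp (2 * x) := by ring
end

section
/- For all real x > 0 and all real ζ with |ζ| ≤ π/10, the quantity r_ζ(x) := (1/4)·ln²(1 + 2 e^{x} cos ζ + e^{2x}) − (arctan( sin ζ / (cos ζ + e^{-x}) ))² satisfies r_ζ(x) ≥ x²/4. -/
open Real

lemma arctan_sq_le_aux (x ζ : ℝ) (hx : 0 < x) (h1 : -(π/2) < ζ) (h2 : ζ < π/2) :
    (Real.arctan (Real.sin ζ / (Real.cos ζ + Real.exp (-x)))) ^ 2 ≤ ζ ^ 2 := by
  have hc : 0 < Real.cos ζ := Real.cos_pos_of_mem_Ioo ⟨h1, h2⟩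
  have he : 0 < Real.exp (-x) := Real.exp_pos _
  have hd : 0 < Real.cos ζ + Real.exp (-x) := by linarith
  rcases le_or_gt 0 ζ with hz | hz
  · have hs : 0 ≤ Real.sin ζ := Real.sin_nonneg_of_nonneg_of_le_pi hz
      (le_trans h2.le (by linarith [Real.pi_pos]))
    have ht : Real.sin ζ / (Real.cos ζ + Real.exp (-x)) ≤ Real.tan ζ := by
      rw [Real.tan_eq_sin_div_cos]
      exact div_le_div_of_nonneg_left hs hc (by linarith)
    have h0 : 0 ≤ Real.arctan (Real.sin ζ / (Real.cos ζ + Real.exp (-x))) := by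
      rw [← Real.arctan_zero]
      exact Real.arctan_strictMono.monotone (div_nonneg hs hd.le)
    have hle : Real.arctan (Real.sin ζ / (Real.cos ζ + Real.exp (-x))) ≤ ζ := by
      calc Real.arctan (Real.sin ζ / (Real.cos ζ + Real.exp (-x)))
          ≤ Real.arctan (Real.tan ζ) := Real.arctan_strictMono.monotone ht
        _ = ζ := Real.arctan_tan h1 h2
    exact sq_le_sq' (by linarith) hle
  · have hs : Real.sin ζ ≤ 0 := by
      have := Real.sin_nonneg_of_nonneg_of_le_pi (x := -ζ) (by linarith)
        (by linarith [Real.pi_pos])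
      rw [Real.sin_neg] at this; linarith
    have ht : Real.tan ζ ≤ Real.sin ζ / (Real.cos ζ + Real.exp (-x)) := by
      rw [Real.tan_eq_sin_div_cos]
      rw [div_le_div_iff₀ hc hd]
      nlinarith
    have h0 : Real.arctan (Real.sin ζ / (Real.cos ζ + Real.exp (-x))) ≤ 0 := by
      rw [← Real.arctan_zero]
      exact Real.arctan_strictMono.monotone (div_nonpos_of_nonpos_of_nonneg hs hd.le)
    have hle : ζ ≤ Real.arctan (Real.sin ζ / (Real.cos ζ + Real.exp (-x))) := by
      calc ζ = Real.arctan (Real.tan ζ) := (Real.arctan_tan h1 h2).symm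
        _ ≤ _ := Real.arctan_strictMono.monotone ht
    have : (Real.arctan (Real.sin ζ / (Real.cos ζ + Real.exp (-x)))) ^ 2 ≤ (-ζ) ^ 2 :=
      sq_le_sq' (by linarith) (by linarith)
    simpa using this

theorem r_zeta_lower_bound_pos (x ζ : ℝ) (hx : 0 < x) (hζ : |ζ| ≤ Real.pi / 10) :
    (1 / 4) * (Real.log (1 + 2 * Real.exp x * Real.cos ζ + Real.exp (2 * x))) ^ 2
      - (Real.arctan (Real.sin ζ / (Real.cos ζ + Real.exp (-x)))) ^ 2
      ≥ x ^ 2 / 4 := by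
  have hpi : π < 3.15 := Real.pi_lt_d2
  have hpi0 : 0 < π := Real.pi_pos
  have habs := abs_le.mp hζ
  have h1 : -(π/2) < ζ := by linarith
  have h2 : ζ < π/2 := by linarith
  have harc := arctan_sq_le_aux x ζ hx h1 h2
  have hζsq : ζ ^ 2 ≤ (0.315 : ℝ) ^ 2 := by
    have : |ζ| ≤ 0.315 := le_trans hζ (by linarith)
    nlinarith [abs_nonneg ζ, sq_abs ζ]
  have hcos : (19/20 : ℝ) ≤ Real.cos ζ := by
    have := Real.one_sub_sq_div_two_le_cos (x := ζ)
    nlinarith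
  have hex : 0 < Real.exp x := Real.exp_pos x
  have hA : (0:ℝ) < 1 + 2 * Real.exp x * Real.cos ζ + Real.exp (2 * x) := by
    nlinarith [Real.exp_pos (2*x)]
  rcases le_or_gt 1 x with hx1 | hx1
  · -- x ≥ 1
    have hlog : 2 * x ≤ Real.log (1 + 2 * Real.exp x * Real.cos ζ + Real.exp (2 * x)) := by
      rw [Real.le_log_iff_exp_le hA]
      nlinarith
    have hlog0 : 0 ≤ 2 * x := by linarith
    have := pow_le_pow_left₀ hlog0 hlog 2
    nlinarith
  · -- 0 < x < 1
    have hge : (3.9 : ℝ) ≤ 1 + 2 * Real.exp x * Real.cos ζ + Real.exp (2 * x) := by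
      have h1x : (1:ℝ) ≤ Real.exp x := Real.one_le_exp hx.le
      have h2x : (1:ℝ) ≤ Real.exp (2*x) := Real.one_le_exp (by linarith)
      nlinarith
    have hexp65 : Real.exp (6/5) ≤ 3.9 := by
      have h5 : Real.exp (6/5) ^ 5 = Real.exp 6 := by
        rw [← Real.exp_nat_mul]; norm_num
      have h6 : Real.exp 6 ≤ (3.9:ℝ)^5 := by
        have : Real.exp 6 = Real.exp 1 ^ 6 := by
          rw [← Real.exp_nat_mul]; norm_num
        rw [this]
        have he1 : Real.exp 1 ≤ 2.7182818286 := Real.exp_one_lt_d9.le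
        calc Real.exp 1 ^ 6 ≤ (2.7182818286:ℝ)^6 :=
              pow_le_pow_left₀ (Real.exp_pos 1).le he1 6
          _ ≤ (3.9:ℝ)^5 := by norm_num
      have h7 : Real.exp (6/5) ^ 5 ≤ (3.9:ℝ)^5 := by rw [h5]; exact h6
      exact le_of_pow_le_pow_left₀ (by norm_num) (by norm_num) h7
    have hlog : (6/5 : ℝ) ≤ Real.log (1 + 2 * Real.exp x * Real.cos ζ + Real.exp (2 * x)) := by
      rw [Real.le_log_iff_exp_le hA]
      linarith
    have := pow_le_pow_left₀ (by norm_num : (0:ℝ) ≤ 6/5) hlog 2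
    nlinarith
end

section
/- For every t ≥ 1 and every real a > 0, with h > 0 and n⁺ a positive integer such that n⁺h ≥ a, the tail sum ∑_{k > n⁺} h·(2/√π)(1+e^{-kh})^{-1}·e^{-t(kh)²} is bounded by (2/√π)·t^{-1/2}·e^{-(n⁺h)²}/(n⁺h). -/
set_option maxHeartbeats 1000000

theorem sinc_quadrature_positive_tail (t h a : ℝ) (ht : 1 ≤ t) (hh : 0 < h)
    (ha : 0 < a) (np : ℕ) (hnp : 0 < np) (hnph : a ≤ (np : ℝ) * h) :
    (∑' k : ℕ,
        h * (2 / Real.sqrt Real.pi) *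
          (1 + Real.exp (-(((np : ℝ) + 1 + k) * h)))⁻¹ *
          Real.exp (-t * (((np : ℝ) + 1 + k) * h) ^ 2))
      ≤ (2 / Real.sqrt Real.pi) * t ^ (-(1 : ℝ) / 2) *
          Real.exp (-((np : ℝ) * h) ^ 2) / ((np : ℝ) * h) := by
  have ht0 : (0:ℝ) < t := by linarith
  set c : ℝ := (np : ℝ) * h with hcdef
  have hc : 0 < c := by
    have : (0:ℝ) < (np:ℝ) := by exact_mod_cast hnp
    positivity
  set s : ℝ := 2 * t * c * h with hsdef
  have hs : 0 < s := by positivity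
  set r : ℝ := Real.exp (-s) with hrdef
  have hr0 : 0 < r := Real.exp_pos _
  have hr1 : r < 1 := by
    rw [hrdef]
    exact Real.exp_lt_one_iff.mpr (by linarith)
  set A : ℝ := 2 / Real.sqrt Real.pi with hAdef
  have hA : 0 < A := by
    have := Real.sqrt_pos.mpr Real.pi_pos
    positivity
  set C : ℝ := A * h * Real.exp (-t * c ^ 2) * r with hCdef
  have hC : 0 < C := by positivity
  set g : ℕ → ℝ := fun k => C * r ^ k with hgdef
  clear_value c s r A C g
  have hle : ∀ k : ℕ,
      h * A * (1 + Real.exp (-(((np : ℝ) + 1 + k) * h)))⁻¹ *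
          Real.exp (-t * (((np : ℝ) + 1 + k) * h) ^ 2) ≤ g k := by
    intro k
    have e1 : (1 + Real.exp (-(((np : ℝ) + 1 + k) * h)))⁻¹ ≤ 1 := by
      rw [inv_le_one_iff₀]
      right
      have := Real.exp_pos (-(((np : ℝ) + 1 + k) * h))
      linarith
    have e2 : Real.exp (-t * (((np : ℝ) + 1 + k) * h) ^ 2) ≤
        Real.exp (-t * c ^ 2) * r ^ (k + 1) := by
      rw [hrdef, ← Real.exp_nat_mul, ← Real.exp_add]
      apply Real.exp_le_exp.mpr
      have hk0 : (0:ℝ) ≤ (k:ℝ) := Nat.cast_nonneg k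
      have expand : ((np : ℝ) + 1 + k) * h = c + ((k:ℝ)+1) * h := by
        rw [hcdef]; ring
      rw [expand]
      have h1 : (0:ℝ) ≤ t * (((k:ℝ)+1)*h)^2 := by positivity
      have h2 : ((k:ℝ)+1) * s ≤ 2 * t * c * (((k:ℝ)+1)*h) := by
        rw [hsdef]; nlinarith
      push_cast
      nlinarith [h1, h2]
    have inv_pos' : (0:ℝ) ≤ (1 + Real.exp (-(((np : ℝ) + 1 + k) * h)))⁻¹ := by
      positivity
    have key : (1 + Real.exp (-(((np : ℝ) + 1 + k) * h)))⁻¹ *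
        Real.exp (-t * (((np : ℝ) + 1 + k) * h) ^ 2) ≤
        Real.exp (-t * c ^ 2) * r ^ (k + 1) := by
      calc (1 + Real.exp (-(((np : ℝ) + 1 + k) * h)))⁻¹ *
          Real.exp (-t * (((np : ℝ) + 1 + k) * h) ^ 2)
          ≤ 1 * (Real.exp (-t * c ^ 2) * r ^ (k + 1)) :=
            mul_le_mul e1 e2 (Real.exp_pos _).le zero_le_one
        _ = Real.exp (-t * c ^ 2) * r ^ (k + 1) := one_mul _
    have := mul_le_mul_of_nonneg_left key (by positivity : (0:ℝ) ≤ h * A)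
    calc h * A * (1 + Real.exp (-(((np : ℝ) + 1 + k) * h)))⁻¹ *
          Real.exp (-t * (((np : ℝ) + 1 + k) * h) ^ 2)
        = h * A * ((1 + Real.exp (-(((np : ℝ) + 1 + k) * h)))⁻¹ *
          Real.exp (-t * (((np : ℝ) + 1 + k) * h) ^ 2)) := by ring
      _ ≤ h * A * (Real.exp (-t * c ^ 2) * r ^ (k + 1)) := this
      _ = g k := by rw [hgdef, hCdef]; ring
  have hgsum : Summable g := by
    rw [hgdef]
    exact (summable_geometric_of_lt_one hr0.le hr1).mul_left C
  have hfsum : Summable (fun k : ℕ =>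
      h * A * (1 + Real.exp (-(((np : ℝ) + 1 + k) * h)))⁻¹ *
          Real.exp (-t * (((np : ℝ) + 1 + k) * h) ^ 2)) := by
    apply Summable.of_nonneg_of_le (fun k => by positivity) hle hgsum
  have step1 := Summable.tsum_le_tsum hle hfsum hgsum
  have hgval : (∑' k : ℕ, g k) = C * (1 - r)⁻¹ := by
    rw [hgdef, tsum_mul_left, tsum_geometric_of_lt_one hr0.le hr1]
  -- final bound
  have hr1' : 0 < 1 - r := by linarith
  have hrs : r * s ≤ 1 - r := by
    have h1 : r * (s + 1) ≤ 1 := by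
      calc r * (s + 1) ≤ r * Real.exp s :=
            mul_le_mul_of_nonneg_left (Real.add_one_le_exp s) hr0.le
        _ = 1 := by rw [hrdef, ← Real.exp_add]; simp
    nlinarith
  have hfrac : r * (1 - r)⁻¹ ≤ 1 / s := by
    rw [mul_inv_le_iff₀ hr1', div_mul_eq_mul_div, le_div_iff₀ hs]
    nlinarith
  have hst : 0 < Real.sqrt t := Real.sqrt_pos.mpr ht0
  have hsqrt : Real.sqrt t ≤ 2 * t := by
    have h1 : (1:ℝ) ≤ Real.sqrt t := by
      rw [show (1:ℝ) = Real.sqrt 1 by simp]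
      exact Real.sqrt_le_sqrt ht
    nlinarith [Real.sq_sqrt ht0.le]
  have hrpow : t ^ (-(1:ℝ)/2) = (Real.sqrt t)⁻¹ := by
    rw [show (-(1:ℝ)/2) = -(1/2:ℝ) by ring, Real.rpow_neg ht0.le, Real.sqrt_eq_rpow]
  have hexp : Real.exp (-t * c ^ 2) ≤ Real.exp (-c ^ 2) := by
    apply Real.exp_le_exp.mpr
    nlinarith [sq_nonneg c]
  have final : C * (1 - r)⁻¹ ≤ A * t ^ (-(1:ℝ)/2) * Real.exp (-c ^ 2) / c := by
    have h1 : C * (1 - r)⁻¹ = A * h * Real.exp (-t * c ^ 2) * (r * (1 - r)⁻¹) := by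
      rw [hCdef]; ring
    rw [h1, hrpow]
    have h2 : A * h * Real.exp (-t * c ^ 2) * (r * (1 - r)⁻¹) ≤
        A * h * Real.exp (-t * c ^ 2) * (1 / s) :=
      mul_le_mul_of_nonneg_left hfrac (by positivity)
    have h3 : A * h * Real.exp (-t * c ^ 2) * (1 / s) =
        A * Real.exp (-t * c ^ 2) / (2 * t * c) := by
      rw [hsdef]; field_simp
    have h4 : A * Real.exp (-t * c ^ 2) / (2 * t * c) ≤
        A * (Real.sqrt t)⁻¹ * Real.exp (-c ^ 2) / c := by
      rw [div_le_div_iff₀ (by positivity) hc]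
      have key2 : Real.exp (-t * c ^ 2) * Real.sqrt t ≤ Real.exp (-c ^ 2) * (2 * t) :=
        mul_le_mul hexp hsqrt hst.le (Real.exp_pos _).le
      have hrw : A * (Real.sqrt t)⁻¹ * Real.exp (-c ^ 2) * (2 * t * c) =
          (A * c * (Real.sqrt t)⁻¹) * (Real.exp (-c ^ 2) * (2 * t)) := by ring
      have hlw : A * Real.exp (-t * c ^ 2) * c =
          (A * c * (Real.sqrt t)⁻¹) * (Real.exp (-t * c ^ 2) * Real.sqrt t) := by
        field_simp
      rw [hlw, hrw]
      exact mul_le_mul_of_nonneg_left key2 (by positivity)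
    linarith
  calc (∑' k : ℕ,
        h * A * (1 + Real.exp (-(((np : ℝ) + 1 + k) * h)))⁻¹ *
          Real.exp (-t * (((np : ℝ) + 1 + k) * h) ^ 2))
      ≤ ∑' k : ℕ, g k := step1
    _ = C * (1 - r)⁻¹ := hgval
    _ ≤ A * t ^ (-(1:ℝ)/2) * Real.exp (-c ^ 2) / c := final
end

section
/- For every t ≥ 1, every h > 0 and every positive integer n, the tail sum ∑_{k < -n} h·(2/√π)(1+e^{-kh})^{-1}·e^{-t·ln²(1+e^{kh})} is bounded by (2/√π)·e^{-nh}. -/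
theorem sinc_quadrature_negative_tail (t h : ℝ) (ht : 1 ≤ t) (hh : 0 < h)
    (n : ℕ) (hn : 0 < n) :
    (∑' k : ℕ,
        h * (2 / Real.sqrt Real.pi) *
          (1 + Real.exp (-(-((n : ℝ) + 1 + k) * h)))⁻¹ *
          Real.exp (-t * (Real.log (1 + Real.exp (-((n : ℝ) + 1 + k) * h))) ^ 2))
      ≤ (2 / Real.sqrt Real.pi) * Real.exp (-((n : ℝ) * h)) := by
  set C := 2 / Real.sqrt Real.pi with hC
  have hC0 : 0 ≤ C := by positivity
  set f : ℕ → ℝ := fun k =>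
    h * C * (1 + Real.exp (-(-((n : ℝ) + 1 + k) * h)))⁻¹ *
      Real.exp (-t * (Real.log (1 + Real.exp (-((n : ℝ) + 1 + k) * h))) ^ 2) with hf
  set g : ℕ → ℝ := fun k => h * C * Real.exp (-(((n : ℝ) + 1) * h)) * Real.exp (-h) ^ k with hg
  have hfg : ∀ k, f k ≤ g k := by
    intro k
    have hy : (0:ℝ) < ((n : ℝ) + 1 + k) * h := by positivity
    have h1 : (1 + Real.exp (-(-((n : ℝ) + 1 + k) * h)))⁻¹ ≤
        Real.exp (-(((n : ℝ) + 1 + k) * h)) := by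
      rw [neg_mul, neg_neg, Real.exp_neg]
      apply inv_anti₀ (Real.exp_pos _)
      linarith
    have h2 : Real.exp (-t * (Real.log (1 + Real.exp (-((n : ℝ) + 1 + k) * h))) ^ 2) ≤ 1 := by
      apply Real.exp_le_one_iff.mpr
      have := sq_nonneg (Real.log (1 + Real.exp (-((n : ℝ) + 1 + k) * h)))
      nlinarith
    have hinv : (0:ℝ) ≤ (1 + Real.exp (-(-((n : ℝ) + 1 + k) * h)))⁻¹ := by positivity
    have hexpk : Real.exp (-(((n : ℝ) + 1 + k) * h)) =
        Real.exp (-(((n : ℝ) + 1) * h)) * Real.exp (-h) ^ k := by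
      rw [← Real.exp_nat_mul, ← Real.exp_add]
      ring_nf
    calc f k ≤ h * C * Real.exp (-(((n : ℝ) + 1 + k) * h)) * 1 := by
          apply mul_le_mul _ h2 (Real.exp_pos _).le (by positivity)
          apply mul_le_mul_of_nonneg_left h1 (by positivity)
      _ = g k := by rw [mul_one, hexpk, hg]; ring
  have hr : Real.exp (-h) < 1 := Real.exp_lt_one_iff.mpr (by linarith)
  have hr0 : (0:ℝ) ≤ Real.exp (-h) := (Real.exp_pos _).le
  have hgsum : Summable g := by
    apply Summable.mul_left
    exact summable_geometric_of_lt_one hr0 hr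
  have hf0 : ∀ k, 0 ≤ f k := by intro k; simp only [hf]; positivity
  have hfsum : Summable f := Summable.of_nonneg_of_le hf0 hfg hgsum
  have h1 : (∑' k, f k) ≤ ∑' k, g k := Summable.tsum_le_tsum hfg hfsum hgsum
  have h2 : (∑' k, g k) = h * C * Real.exp (-(((n : ℝ) + 1) * h)) * (1 - Real.exp (-h))⁻¹ := by
    rw [hg, tsum_mul_left, tsum_geometric_of_lt_one hr0 hr]
  have hden : (0:ℝ) < 1 - Real.exp (-h) := by linarith
  have h3 : h * C * Real.exp (-(((n : ℝ) + 1) * h)) * (1 - Real.exp (-h))⁻¹ ≤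
      C * Real.exp (-((n : ℝ) * h)) := by
    rw [← div_eq_mul_inv, div_le_iff₀ hden]
    have key : (h + 1) * Real.exp (-h) ≤ 1 := by
      have := Real.add_one_le_exp h
      calc (h + 1) * Real.exp (-h) ≤ Real.exp h * Real.exp (-h) :=
            mul_le_mul_of_nonneg_right this hr0
        _ = 1 := by rw [← Real.exp_add]; simp
    have hexps : Real.exp (-(((n : ℝ) + 1) * h)) = Real.exp (-((n : ℝ) * h)) * Real.exp (-h) := by
      rw [← Real.exp_add]; ring_nf
    rw [hexps]
    have hen : (0:ℝ) < Real.exp (-((n : ℝ) * h)) := Real.exp_pos _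
    nlinarith [mul_le_mul_of_nonneg_left key hen.le]
  calc (∑' k, f k) ≤ ∑' k, g k := h1
    _ = _ := h2
    _ ≤ C * Real.exp (-((n : ℝ) * h)) := h3
end

section
/- Let u ∈ ℓ²(∇^d), N ∈ ℕ, and suppose Λ^{(1)},…,Λ^{(d)} ⊂ ∇ are finite sets obtained by retaining the N largest values among all contractions {π^{(i)}_ν(u) : ν ∈ ∇, i = 1,…,d}, distributed to their respective coordinate directions, so that ∑_i #Λ^{(i)} ≤ N. Set Λ := Λ^{(1)} × ⋯ × Λ^{(d)}. Then ‖u − R_Λ u‖² ≤ ∑_{i=1}^d ∑_{ν ∈ ∇ \ Λ^{(i)}} |π^{(i)}_ν(u)|², where R_Λ u denotes the restriction of u to Λ (entries outside Λ set to zero). -/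
/-- The squared contraction `|π^{(i)}_ν(u)|²`: the squared ℓ²-norm of the slice of `u`
with `i`-th index fixed to `ν`. -/
noncomputable def contractionSq {I : Type*} {d : ℕ} (u : (Fin d → I) → ℝ) (i : Fin d)
    (ν : I) : ℝ :=
  ∑' m : {m : Fin d → I // m i = ν}, (u m.1) ^ 2

theorem coarsening_error_bound {I : Type*} [Countable I] (d N : ℕ)
    (u : (Fin d → I) → ℝ) (hu : Summable fun m : Fin d → I => (u m) ^ 2)
    (Λ : Fin d → Finset I)
    (hcard : ∑ i : Fin d, (Λ i).card ≤ N)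
    (hlargest : ∀ i : Fin d, ∀ ν ∈ Λ i, ∀ j : Fin d, ∀ μ : I, μ ∉ Λ j →
      Real.sqrt (contractionSq u j μ) ≤ Real.sqrt (contractionSq u i ν)) :
    (∑' m : Fin d → I,
        (u m - Set.indicator {m : Fin d → I | ∀ i, m i ∈ Λ i} u m) ^ 2)
      ≤ ∑ i : Fin d, ∑' ν : {ν : I // ν ∉ Λ i},
          (Real.sqrt (contractionSq u i ν.1)) ^ 2 := by
  classical
  set f : (Fin d → I) → ℝ := fun m => (u m) ^ 2 with hfdef
  set S : Set (Fin d → I) := {m : Fin d → I | ∀ i, m i ∈ Λ i} with hSdef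
  have hcs_nonneg : ∀ (i : Fin d) (ν : I), 0 ≤ contractionSq u i ν := fun i ν =>
    tsum_nonneg fun m => sq_nonneg _
  -- rewrite RHS inner sums
  have hR : ∀ i : Fin d,
      (∑' ν : {ν : I // ν ∉ Λ i}, (Real.sqrt (contractionSq u i ν.1)) ^ 2)
        = ∑' m : {m : Fin d → I // m i ∉ Λ i}, f m.1 := by
    intro i
    have h1 : ∀ ν : {ν : I // ν ∉ Λ i},
        (Real.sqrt (contractionSq u i ν.1)) ^ 2 = contractionSq u i ν.1 := fun ν =>
      Real.sq_sqrt (hcs_nonneg i ν.1)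
    rw [tsum_congr h1]
    let e : {m : Fin d → I // m i ∉ Λ i}
        ≃ (Σ ν : {ν : I // ν ∉ Λ i}, {m : Fin d → I // m i = ν.1}) :=
      { toFun := fun m => ⟨⟨m.1 i, m.2⟩, ⟨m.1, rfl⟩⟩
        invFun := fun p => ⟨p.2.1, by rw [p.2.2]; exact p.1.2⟩
        left_inv := fun m => rfl
        right_inv := fun p => by
          obtain ⟨⟨ν, hν⟩, ⟨m, hm⟩⟩ := p
          have hm' : m i = ν := hm
          subst hm'
          rfl }
    have hs : Summable fun m : {m : Fin d → I // m i ∉ Λ i} => f m.1 :=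
      hu.subtype _
    have hs2 : Summable fun p : (Σ ν : {ν : I // ν ∉ Λ i},
        {m : Fin d → I // m i = ν.1}) => f p.2.1 :=
      (e.summable_iff (f := fun p : (Σ ν : {ν : I // ν ∉ Λ i},
        {m : Fin d → I // m i = ν.1}) => f p.2.1)).mp hs
    calc ∑' ν : {ν : I // ν ∉ Λ i}, contractionSq u i ν.1
        = ∑' ν : {ν : I // ν ∉ Λ i}, ∑' m : {m : Fin d → I // m i = ν.1}, f m.1 := rfl
      _ = ∑' p : (Σ ν : {ν : I // ν ∉ Λ i}, {m : Fin d → I // m i = ν.1}), f p.2.1 :=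
          hs2.tsum_sigma.symm
      _ = ∑' m : {m : Fin d → I // m i ∉ Λ i}, f ((e m).2.1) :=
          (e.tsum_eq (fun p : (Σ ν : {ν : I // ν ∉ Λ i},
            {m : Fin d → I // m i = ν.1}) => f p.2.1)).symm
      _ = ∑' m : {m : Fin d → I // m i ∉ Λ i}, f m.1 := rfl
  -- rewrite LHS
  have hL : ∀ m : Fin d → I,
      (u m - Set.indicator S u m) ^ 2 = Sᶜ.indicator f m := by
    intro m
    by_cases hm : m ∈ S
    · rw [Set.indicator_of_mem hm, Set.indicator_of_notMem (by simpa using hm)]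
      ring
    · rw [Set.indicator_of_notMem hm, Set.indicator_of_mem (by simpa using hm)]
      ring
  rw [tsum_congr hL]
  have hind : ∀ s : Set (Fin d → I), Summable (s.indicator f) := fun s =>
    hu.indicator s
  have key : (∑' m : Fin d → I, Sᶜ.indicator f m)
      ≤ ∑' m : Fin d → I, ∑ i : Fin d, ({m : Fin d → I | m i ∉ Λ i}).indicator f m := by
    refine Summable.tsum_le_tsum (fun m => ?_) (hind _) (summable_sum fun i _ => hind _)
    by_cases hm : m ∈ S
    · rw [Set.indicator_of_notMem (by simpa using hm)]
      exact Finset.sum_nonneg fun i _ => Set.indicator_nonneg (f := f) (fun x _ => sq_nonneg (u x)) m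
    · rw [Set.indicator_of_mem (by simpa using hm)]
      simp only [hSdef, Set.mem_setOf_eq, not_forall] at hm
      obtain ⟨i0, hi0⟩ := hm
      have h1 : f m = ({m : Fin d → I | m i0 ∉ Λ i0}).indicator f m :=
        (Set.indicator_of_mem (show m ∈ {m : Fin d → I | m i0 ∉ Λ i0} from hi0) f).symm
      rw [h1]
      exact Finset.single_le_sum
        (f := fun i : Fin d => ({m : Fin d → I | m i ∉ Λ i}).indicator f m)
        (fun i _ => Set.indicator_nonneg (f := f) (fun x _ => sq_nonneg (u x)) m)
        (Finset.mem_univ i0)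
  calc (∑' m : Fin d → I, Sᶜ.indicator f m)
      ≤ ∑' m : Fin d → I, ∑ i : Fin d, ({m : Fin d → I | m i ∉ Λ i}).indicator f m := key
    _ = ∑ i : Fin d, ∑' m : Fin d → I, ({m : Fin d → I | m i ∉ Λ i}).indicator f m :=
        Summable.tsum_finsetSum fun i _ => hind _
    _ = ∑ i : Fin d, ∑' m : {m : Fin d → I // m i ∉ Λ i}, f m.1 := by
        refine Finset.sum_congr rfl fun i _ => ?_
        exact (tsum_subtype {m : Fin d → I | m i ∉ Λ i} f).symm
    _ = ∑ i : Fin d, ∑' ν : {ν : I // ν ∉ Λ i}, (Real.sqrt (contractionSq u i ν.1)) ^ 2 := by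
        refine Finset.sum_congr rfl fun i _ => (hR i).symm
end

section
/- Let u ∈ ℓ²(∇^d) and let Λ(u;N) = Λ^{(1)} × ⋯ × Λ^{(d)} be a product set whose factors retain the N largest contraction values (so that the discarded contraction mass ∑_i ∑_{ν∉Λ^{(i)}} |π^{(i)}_ν(u)|² is minimal among all product sets with ∑_i #Λ̂^{(i)} ≤ N). Then for any product set Λ̂ = Λ̂^{(1)} × ⋯ × Λ̂^{(d)} with ∑_i #Λ̂^{(i)} ≤ N, one has ‖u − R_{Λ(u;N)} u‖ ≤ √d · ‖u − R_{Λ̂} u‖. -/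
/-- Discarded contraction mass `∑_i ∑_{ν ∉ Λ^{(i)}} |π^{(i)}_ν(u)|²` of a product set. -/
noncomputable def discardedMass {I : Type*} {d : ℕ} (u : (Fin d → I) → ℝ)
    (Λ : Fin d → Finset I) : ℝ :=
  ∑ i : Fin d, ∑' ν : {ν : I // ν ∉ Λ i}, contractionSq u i ν.1

def sliceEquiv {I : Type*} {d : ℕ} (i : Fin d) (s : Set I) :
    (Σ ν : s, {m : Fin d → I // m i = ν.1}) ≃ {m : Fin d → I | m i ∈ s} where
  toFun x := ⟨x.2.1, by simpa [x.2.2] using x.1.2⟩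
  invFun m := ⟨⟨m.1 i, m.2⟩, ⟨m.1, rfl⟩⟩
  left_inv := by
    rintro ⟨⟨ν, hν⟩, m, hm⟩
    obtain rfl : ν = m i := (hm : m i = ν).symm
    rfl
  right_inv := by rintro ⟨m, hm⟩; rfl

lemma slice_tsum {I : Type*} {d : ℕ} (u : (Fin d → I) → ℝ)
    (hu : Summable fun m : Fin d → I => (u m) ^ 2) (i : Fin d) (s : Set I) :
    ∑' ν : s, contractionSq u i ν.1 = ∑' m : {m : Fin d → I | m i ∈ s}, u m.1 ^ 2 := by
  have hsum : Summable fun m : {m : Fin d → I | m i ∈ s} => u m.1 ^ 2 :=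
    hu.subtype _
  have h2 : Summable fun x : (Σ ν : s, {m : Fin d → I // m i = ν.1}) =>
      u ((sliceEquiv i s) x).1 ^ 2 := hsum.comp_injective (sliceEquiv i s).injective
  calc ∑' ν : s, contractionSq u i ν.1
      = ∑' (ν : s) (m : {m : Fin d → I // m i = ν.1}), u m.1 ^ 2 := rfl
    _ = ∑' x : (Σ ν : s, {m : Fin d → I // m i = ν.1}), u x.2.1 ^ 2 := (Summable.tsum_sigma h2).symm
    _ = ∑' m : {m : Fin d → I | m i ∈ s}, u m.1 ^ 2 :=
        (sliceEquiv i s).tsum_eq fun m => u m.1 ^ 2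

theorem coarsening_near_optimality {I : Type*} [Countable I] (d N : ℕ)
    (u : (Fin d → I) → ℝ) (hu : Summable fun m : Fin d → I => (u m) ^ 2)
    (Λ Λhat : Fin d → Finset I)
    (hcardΛ : ∑ i : Fin d, (Λ i).card ≤ N)
    (hopt : ∀ Λ' : Fin d → Finset I, (∑ i : Fin d, (Λ' i).card) ≤ N →
      discardedMass u Λ ≤ discardedMass u Λ')
    (hcardΛhat : ∑ i : Fin d, (Λhat i).card ≤ N) :
    Real.sqrt (∑' m : Fin d → I,
        (u m - Set.indicator {m : Fin d → I | ∀ i, m i ∈ Λ i} u m) ^ 2)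
      ≤ Real.sqrt d *
        Real.sqrt (∑' m : Fin d → I,
          (u m - Set.indicator {m : Fin d → I | ∀ i, m i ∈ Λhat i} u m) ^ 2) := by
  classical
  set f : (Fin d → I) → ℝ := fun m => u m ^ 2 with hf
  have hf0 : ∀ m, 0 ≤ f m := fun m => sq_nonneg _
  -- rewrite the error as indicator of the complement
  have key : ∀ Λ' : Fin d → Finset I,
      (∑' m : Fin d → I, (u m - Set.indicator {m : Fin d → I | ∀ i, m i ∈ Λ' i} u m) ^ 2)
        = ∑' m : Fin d → I, ({m : Fin d → I | ∀ i, m i ∈ Λ' i}ᶜ).indicator f m := by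
    intro Λ'
    refine tsum_congr fun m => ?_
    by_cases h : m ∈ {m : Fin d → I | ∀ i, m i ∈ Λ' i} <;>
      simp [f, Set.indicator_of_mem, Set.indicator_of_notMem, h]
  -- discardedMass as sum of indicator tsums
  have dm_eq : ∀ Λ' : Fin d → Finset I,
      discardedMass u Λ' = ∑ i : Fin d,
        ∑' m : Fin d → I, ({m : Fin d → I | m i ∉ Λ' i}).indicator f m := by
    intro Λ'
    unfold discardedMass
    refine Finset.sum_congr rfl fun i _ => ?_
    exact (slice_tsum u hu i {ν : I | ν ∉ Λ' i}).trans
      (tsum_subtype {m : Fin d → I | m i ∉ Λ' i} f)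
  -- upper bound for Λ
  have upper : (∑' m : Fin d → I, ({m : Fin d → I | ∀ i, m i ∈ Λ i}ᶜ).indicator f m)
      ≤ discardedMass u Λ := by
    rw [dm_eq]
    have hsi : ∀ i : Fin d, Summable (({m : Fin d → I | m i ∉ Λ i}).indicator f) :=
      fun i => hu.indicator _
    rw [← Summable.tsum_finsetSum (fun i _ => hsi i)]
    refine Summable.tsum_le_tsum (fun m => ?_) (hu.indicator _) (summable_sum fun i _ => hsi i)
    by_cases h : m ∈ {m : Fin d → I | ∀ i, m i ∈ Λ i}
    · rw [Set.indicator_of_notMem (by simpa using h)]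
      exact Finset.sum_nonneg fun i _ => Set.indicator_nonneg (fun a _ => hf0 a) _
    · obtain ⟨i, hi⟩ := not_forall.mp h
      calc ({m : Fin d → I | ∀ i, m i ∈ Λ i}ᶜ).indicator f m = f m :=
            Set.indicator_of_mem (show m ∈ {m : Fin d → I | ∀ i, m i ∈ Λ i}ᶜ from h) f
        _ = ({m : Fin d → I | m i ∉ Λ i}).indicator f m :=
            (Set.indicator_of_mem (show m ∈ {m : Fin d → I | m i ∉ Λ i} from hi) f).symm
        _ ≤ ∑ j : Fin d, ({m : Fin d → I | m j ∉ Λ j}).indicator f m :=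
            Finset.single_le_sum
              (f := fun j => ({m : Fin d → I | m j ∉ Λ j}).indicator f m)
              (fun j _ => Set.indicator_nonneg (fun a _ => hf0 a) _) (Finset.mem_univ i)
  -- lower bound for Λhat
  have lower : discardedMass u Λhat ≤ (d : ℝ) *
      ∑' m : Fin d → I, ({m : Fin d → I | ∀ i, m i ∈ Λhat i}ᶜ).indicator f m := by
    rw [dm_eq]
    have : ∀ i : Fin d,
        (∑' m : Fin d → I, ({m : Fin d → I | m i ∉ Λhat i}).indicator f m)
        ≤ ∑' m : Fin d → I, ({m : Fin d → I | ∀ i, m i ∈ Λhat i}ᶜ).indicator f m := by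
      intro i
      refine Summable.tsum_le_tsum (fun m => ?_) (hu.indicator _) (hu.indicator _)
      refine Set.indicator_le_indicator_of_subset ?_ hf0 m
      intro m hm hall
      exact hm (hall i)
    calc (∑ i : Fin d, ∑' m : Fin d → I, ({m : Fin d → I | m i ∉ Λhat i}).indicator f m)
        ≤ ∑ _i : Fin d,
          ∑' m : Fin d → I, ({m : Fin d → I | ∀ i, m i ∈ Λhat i}ᶜ).indicator f m :=
          Finset.sum_le_sum fun i _ => this i
      _ = (d : ℝ) * _ := by
          rw [Finset.sum_const, Finset.card_univ, Fintype.card_fin, nsmul_eq_mul]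
  -- combine
  rw [key Λ, key Λhat, ← Real.sqrt_mul (by positivity : (0:ℝ) ≤ (d:ℝ))]
  apply Real.sqrt_le_sqrt
  calc (∑' m : Fin d → I, ({m : Fin d → I | ∀ i, m i ∈ Λ i}ᶜ).indicator f m)
      ≤ discardedMass u Λ := upper
    _ ≤ discardedMass u Λhat := hopt Λhat hcardΛhat
    _ ≤ _ := lower
end

section
/- Let ω^{(i)}_ν > 0 (i=1,…,d, ν ∈ ∇) and define the global weights ω_ν = (∑_{i=1}^d (ω^{(i)}_{ν_i})²)^{1/2} for ν ∈ ∇^d, with corresponding diagonal scaling S on ℓ²(∇^d) and one-dimensional scalings Ŝ_i = diag(ω^{(i)}_ν) on ℓ²(∇). Then for any bounded operator B on ℓ²(∇), the operator norm of S^{-1}(B ⊗ id ⊗ ⋯ ⊗ id)S^{-1} on ℓ²(∇^d) is bounded by the operator norm of Ŝ_1^{-1} B Ŝ_1^{-1} on ℓ²(∇). -/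
open scoped ENNReal

/-- The global scaling weight `ω_ν = (∑_i (ω^{(i)}_{ν_i})²)^{1/2}` built from
one-dimensional weights `ωi`. -/
noncomputable def globalWeight {ι : Type*} {d : ℕ} (ωi : Fin d → ι → ℝ)
    (ν : Fin d → ι) : ℝ :=
  Real.sqrt (∑ i : Fin d, (ωi i (ν i)) ^ 2)

lemma aux_norm_sq {γ : Type*} (f : lp (fun _ : γ => ℝ) 2) :
    ‖f‖ ^ 2 = ∑' i, ‖(f : ∀ _ : γ, ℝ) i‖ ^ 2 := by
  have h := lp.norm_rpow_eq_tsum (p := 2) (by norm_num) f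
  rw [show ((2:ℝ≥0∞)).toReal = ((2:ℕ):ℝ) by norm_num] at h
  simpa only [Real.rpow_natCast] using h

lemma aux_summable_sq {γ : Type*} (f : lp (fun _ : γ => ℝ) 2) :
    Summable fun i => ‖(f : ∀ _ : γ, ℝ) i‖ ^ 2 := by
  have h := (lp.memℓp f).summable (p := 2) (by norm_num)
  rw [show ((2:ℝ≥0∞)).toReal = ((2:ℕ):ℝ) by norm_num] at h
  simpa only [Real.rpow_natCast] using h

set_option maxHeartbeats 1000000 in
theorem rescaled_tensor_operator_norm_bound {ι : Type*} (d : ℕ) (hd : 0 < d)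
    (ωi : Fin d → ι → ℝ) (hωi : ∀ i ν, 0 < ωi i ν)
    (b : ι → ι → ℝ)
    (B A : lp (fun _ : ι => ℝ) 2 →L[ℝ] lp (fun _ : ι => ℝ) 2)
    (M : lp (fun _ : Fin d → ι => ℝ) 2 →L[ℝ] lp (fun _ : Fin d → ι => ℝ) 2)
    -- `B` is the bounded operator on `ℓ²(∇)` with matrix `b`
    (hB : ∀ (v : lp (fun _ : ι => ℝ) 2) (μ : ι),
      (B v : ∀ _ : ι, ℝ) μ = ∑' κ : ι, b μ κ * (v : ∀ _ : ι, ℝ) κ)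
    -- `A = Ŝ₁⁻¹ B Ŝ₁⁻¹` on `ℓ²(∇)`
    (hA : ∀ (v : lp (fun _ : ι => ℝ) 2) (μ : ι),
      (A v : ∀ _ : ι, ℝ) μ
        = (ωi ⟨0, hd⟩ μ)⁻¹ * ∑' κ : ι, b μ κ * ((ωi ⟨0, hd⟩ κ)⁻¹ * (v : ∀ _ : ι, ℝ) κ))
    -- `M = S⁻¹ (B ⊗ id ⊗ ⋯ ⊗ id) S⁻¹` on `ℓ²(∇^d)`
    (hM : ∀ (u : lp (fun _ : Fin d → ι => ℝ) 2) (ν : Fin d → ι),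
      (M u : ∀ _ : Fin d → ι, ℝ) ν
        = (globalWeight ωi ν)⁻¹ *
            ∑' κ : ι, b (ν ⟨0, hd⟩) κ *
              ((globalWeight ωi (Function.update ν ⟨0, hd⟩ κ))⁻¹ *
                (u : ∀ _ : Fin d → ι, ℝ) (Function.update ν ⟨0, hd⟩ κ))) :
    ‖M‖ ≤ ‖A‖ := by
  classical
  set z : Fin d := ⟨0, hd⟩ with hz
  set ω : ι → ℝ := ωi z with hωdef
  -- positivity and lower bound for the global weight
  have hgpos : ∀ ν : Fin d → ι, 0 < globalWeight ωi ν := by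
    intro ν
    apply Real.sqrt_pos.2
    exact Finset.sum_pos (fun i _ => pow_pos (hωi i (ν i)) 2) ⟨z, Finset.mem_univ z⟩
  have hωle : ∀ ν : Fin d → ι, ω (ν z) ≤ globalWeight ωi ν := by
    intro ν
    have h1 : (ω (ν z)) ^ 2 ≤ ∑ i : Fin d, (ωi i (ν i)) ^ 2 :=
      Finset.single_le_sum (f := fun i => (ωi i (ν i)) ^ 2)
        (fun i _ => sq_nonneg _) (Finset.mem_univ z)
    calc ω (ν z) = Real.sqrt ((ω (ν z)) ^ 2) := (Real.sqrt_sq (hωi z _).le).symm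
      _ ≤ _ := Real.sqrt_le_sqrt h1
  have hratio : ∀ ν : Fin d → ι, ω (ν z) / globalWeight ωi ν ≤ 1 := by
    intro ν
    rw [div_le_one (hgpos ν)]
    exact hωle ν
  have hratio0 : ∀ ν : Fin d → ι, 0 ≤ ω (ν z) / globalWeight ωi ν := fun ν =>
    div_nonneg (hωi z _).le (hgpos ν).le
  -- the splitting equivalence
  set R := ({ j : Fin d // j ≠ z } → ι) with hR
  set e : (Fin d → ι) ≃ ι × R := Equiv.funSplitAt z ι with he
  have hez : ∀ (κ : ι) (r : R), (e.symm (κ, r)) z = κ := by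
    intro κ r
    rw [he, Equiv.funSplitAt_symm_apply, dif_pos rfl]
  have hesymm_ne : ∀ (κ : ι) (r : R) (j : Fin d) (h : j ≠ z),
      (e.symm (κ, r)) j = r ⟨j, h⟩ := by
    intro κ r j h
    rw [he, Equiv.funSplitAt_symm_apply, dif_neg h]
  have heapp : ∀ (ν : Fin d → ι) (j : Fin d) (h : j ≠ z), (e ν).2 ⟨j, h⟩ = ν j := by
    intro ν j h
    rw [he]
    rfl
  have hupdate : ∀ (ν : Fin d → ι) (κ : ι),
      Function.update ν z κ = e.symm (κ, (e ν).2) := by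
    intro ν κ
    funext j
    by_cases h : j = z
    · subst h; rw [Function.update_self, hez]
    · rw [Function.update_of_ne h, hesymm_ne κ _ j h, heapp ν j h]
  refine M.opNorm_le_bound (norm_nonneg A) (fun u => ?_)
  -- the rescaled slices of u
  set v : R → ι → ℝ := fun r κ =>
    (ω κ / globalWeight ωi (e.symm (κ, r))) * (u : ∀ _ : Fin d → ι, ℝ) (e.symm (κ, r))
    with hv
  have hvle : ∀ (r : R) (κ : ι), ‖v r κ‖ ≤ ‖(u : ∀ _ : Fin d → ι, ℝ) (e.symm (κ, r))‖ := by
    intro r κ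
    rw [hv]
    simp only [norm_mul]
    have h1 : ‖ω κ / globalWeight ωi (e.symm (κ, r))‖ ≤ 1 := by
      rw [Real.norm_eq_abs, abs_of_nonneg]
      · have := hratio (e.symm (κ, r)); rwa [hez κ r] at this
      · have := hratio0 (e.symm (κ, r)); rwa [hez κ r] at this
    calc ‖ω κ / globalWeight ωi (e.symm (κ, r))‖ * ‖(u : ∀ _ : Fin d → ι, ℝ) (e.symm (κ, r))‖
        ≤ 1 * ‖(u : ∀ _ : Fin d → ι, ℝ) (e.symm (κ, r))‖ :=
          mul_le_mul_of_nonneg_right h1 (norm_nonneg _)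
      _ = _ := one_mul _
  have hinj : ∀ r : R, Function.Injective (fun κ : ι => e.symm (κ, r)) := by
    intro r κ₁ κ₂ h
    have h2 := congrArg (fun ν : Fin d → ι => ν z) h
    simpa only [hez] using h2
  have husum : ∀ r : R, Summable fun κ : ι =>
      ‖(u : ∀ _ : Fin d → ι, ℝ) (e.symm (κ, r))‖ ^ 2 := by
    intro r
    exact (aux_summable_sq u).comp_injective (hinj r)
  have hvsum : ∀ r : R, Summable fun κ : ι => ‖v r κ‖ ^ 2 := by
    intro r
    refine Summable.of_nonneg_of_le (fun κ => sq_nonneg _) (fun κ => ?_) (husum r)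
    exact pow_le_pow_left₀ (norm_nonneg _) (hvle r κ) 2
  have hvmem : ∀ r : R, Memℓp (v r) 2 := by
    intro r
    apply memℓp_gen
    rw [show ((2:ℝ≥0∞)).toReal = ((2:ℕ):ℝ) by norm_num]
    simpa only [Real.rpow_natCast] using hvsum r
  set V : R → lp (fun _ : ι => ℝ) 2 := fun r => ⟨v r, hvmem r⟩ with hV
  have hVcoe : ∀ (r : R) (κ : ι), (V r : ∀ _ : ι, ℝ) κ = v r κ := fun r κ => rfl
  -- key identity
  have hkey : ∀ ν : Fin d → ι,
      (M u : ∀ _ : Fin d → ι, ℝ) ν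
        = (ω (ν z) / globalWeight ωi ν) * (A (V (e ν).2) : ∀ _ : ι, ℝ) (ν z) := by
    intro ν
    have hterm : ∀ κ : ι, (ω κ)⁻¹ * v (e ν).2 κ
        = (globalWeight ωi (Function.update ν z κ))⁻¹ *
            (u : ∀ _ : Fin d → ι, ℝ) (Function.update ν z κ) := by
      intro κ
      rw [hupdate ν κ, hv]
      have hκne : ω κ ≠ 0 := (hωi z κ).ne'
      have hgne : globalWeight ωi (e.symm (κ, (e ν).2)) ≠ 0 :=
        (hgpos (e.symm (κ, (e ν).2))).ne'
      field_simp
    rw [hM u ν, hA (V (e ν).2) (ν z)]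
    have htsum : ∑' κ : ι, b (ν z) κ * ((ω κ)⁻¹ * (V (e ν).2 : ∀ _ : ι, ℝ) κ)
        = ∑' κ : ι, b (ν z) κ *
            ((globalWeight ωi (Function.update ν z κ))⁻¹ *
              (u : ∀ _ : Fin d → ι, ℝ) (Function.update ν z κ)) := by
      apply tsum_congr
      intro κ
      rw [hVcoe, hterm κ]
    rw [htsum]
    have hne : ω (ν z) ≠ 0 := (hωi z _).ne'
    have hgne : globalWeight ωi ν ≠ 0 := (hgpos ν).ne'
    field_simp
  -- pointwise bound
  have hptwise : ∀ (r : R) (κ : ι),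
      ‖(M u : ∀ _ : Fin d → ι, ℝ) (e.symm (κ, r))‖ ^ 2
        ≤ ‖(A (V r) : ∀ _ : ι, ℝ) κ‖ ^ 2 := by
    intro r κ
    have h1 := hkey (e.symm (κ, r))
    rw [hez κ r, Equiv.apply_symm_apply] at h1
    rw [h1]
    apply pow_le_pow_left₀ (norm_nonneg _)
    rw [norm_mul]
    calc ‖ω κ / globalWeight ωi (e.symm (κ, r))‖ * ‖(A (V r) : ∀ _ : ι, ℝ) κ‖
        ≤ 1 * ‖(A (V r) : ∀ _ : ι, ℝ) κ‖ := by
          apply mul_le_mul_of_nonneg_right _ (norm_nonneg _)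
          rw [Real.norm_eq_abs, abs_of_nonneg]
          · have := hratio (e.symm (κ, r)); rwa [hez κ r] at this
          · have := hratio0 (e.symm (κ, r)); rwa [hez κ r] at this
      _ = _ := one_mul _
  -- combined equivalence reindexing (r, κ)
  set e' : (Fin d → ι) ≃ R × ι := e.trans (Equiv.prodComm ι R) with he'
  have he'symm : ∀ (r : R) (κ : ι), e'.symm (r, κ) = e.symm (κ, r) := fun r κ => rfl
  -- summability of the big families
  have hMusum : Summable fun q : R × ι =>
      ‖(M u : ∀ _ : Fin d → ι, ℝ) (e'.symm q)‖ ^ 2 :=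
    (Equiv.summable_iff e'.symm).2 (aux_summable_sq (M u))
  have hUsum : Summable fun q : R × ι =>
      ‖(u : ∀ _ : Fin d → ι, ℝ) (e'.symm q)‖ ^ 2 :=
    (Equiv.summable_iff e'.symm).2 (aux_summable_sq u)
  -- fiberwise sums are summable
  have hGsum : Summable fun r : R => ∑' κ : ι, ‖(u : ∀ _ : Fin d → ι, ℝ) (e.symm (κ, r))‖ ^ 2 := by
    have := ((summable_prod_of_nonneg (f := fun q : R × ι =>
      ‖(u : ∀ _ : Fin d → ι, ℝ) (e'.symm q)‖ ^ 2) (fun q => sq_nonneg _)).1 hUsum).2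
    exact this
  have hFsumfib : Summable fun r : R =>
      ∑' κ : ι, ‖(M u : ∀ _ : Fin d → ι, ℝ) (e.symm (κ, r))‖ ^ 2 := by
    have := ((summable_prod_of_nonneg (f := fun q : R × ι =>
      ‖(M u : ∀ _ : Fin d → ι, ℝ) (e'.symm q)‖ ^ 2) (fun q => sq_nonneg _)).1 hMusum).2
    exact this
  -- ‖V r‖² ≤ G r, and summability of r ↦ ‖V r‖²
  have hVle : ∀ r : R, ‖V r‖ ^ 2 ≤ ∑' κ : ι, ‖(u : ∀ _ : Fin d → ι, ℝ) (e.symm (κ, r))‖ ^ 2 := by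
    intro r
    rw [aux_norm_sq (V r)]
    exact Summable.tsum_le_tsum (fun κ => pow_le_pow_left₀ (norm_nonneg _) (hvle r κ) 2)
      (hvsum r) (husum r)
  have hVsummable : Summable fun r : R => ‖V r‖ ^ 2 :=
    Summable.of_nonneg_of_le (fun r => sq_nonneg _) hVle hGsum
  have hAVsummable : Summable fun r : R => ‖A (V r)‖ ^ 2 := by
    refine Summable.of_nonneg_of_le (fun r => sq_nonneg _) (fun r => ?_)
      (hVsummable.mul_left (‖A‖ ^ 2))
    calc ‖A (V r)‖ ^ 2 ≤ (‖A‖ * ‖V r‖) ^ 2 :=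
          pow_le_pow_left₀ (norm_nonneg _) (A.le_opNorm (V r)) 2
      _ = ‖A‖ ^ 2 * ‖V r‖ ^ 2 := by ring
  -- main estimate
  have hmain : ‖M u‖ ^ 2 ≤ (‖A‖ * ‖u‖) ^ 2 := by
    have step1 : ‖M u‖ ^ 2
        = ∑' q : R × ι, ‖(M u : ∀ _ : Fin d → ι, ℝ) (e'.symm q)‖ ^ 2 := by
      rw [aux_norm_sq (M u), ← Equiv.tsum_eq e'.symm
        (fun ν => ‖(M u : ∀ _ : Fin d → ι, ℝ) ν‖ ^ 2)]
    have step2 : ∑' q : R × ι, ‖(M u : ∀ _ : Fin d → ι, ℝ) (e'.symm q)‖ ^ 2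
        = ∑' r : R, ∑' κ : ι, ‖(M u : ∀ _ : Fin d → ι, ℝ) (e.symm (κ, r))‖ ^ 2 :=
      Summable.tsum_prod' hMusum (fun r => hMusum.prod_factor r)
    have step3 : ∑' r : R, ∑' κ : ι, ‖(M u : ∀ _ : Fin d → ι, ℝ) (e.symm (κ, r))‖ ^ 2
        ≤ ∑' r : R, ‖A (V r)‖ ^ 2 := by
      refine Summable.tsum_le_tsum (fun r => ?_) hFsumfib hAVsummable
      rw [aux_norm_sq (A (V r))]
      exact Summable.tsum_le_tsum (hptwise r)
        (Summable.of_nonneg_of_le (fun κ => sq_nonneg _) (hptwise r) (aux_summable_sq (A (V r))))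
        (aux_summable_sq (A (V r)))
    have step4 : ∑' r : R, ‖A (V r)‖ ^ 2 ≤ ‖A‖ ^ 2 * ∑' r : R, ‖V r‖ ^ 2 := by
      rw [← tsum_mul_left]
      refine Summable.tsum_le_tsum (fun r => ?_) hAVsummable (hVsummable.mul_left _)
      calc ‖A (V r)‖ ^ 2 ≤ (‖A‖ * ‖V r‖) ^ 2 :=
            pow_le_pow_left₀ (norm_nonneg _) (A.le_opNorm (V r)) 2
        _ = ‖A‖ ^ 2 * ‖V r‖ ^ 2 := by ring
    have step5 : ∑' r : R, ‖V r‖ ^ 2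
        ≤ ∑' r : R, ∑' κ : ι, ‖(u : ∀ _ : Fin d → ι, ℝ) (e.symm (κ, r))‖ ^ 2 :=
      Summable.tsum_le_tsum hVle hVsummable hGsum
    have step6 : ∑' r : R, ∑' κ : ι, ‖(u : ∀ _ : Fin d → ι, ℝ) (e.symm (κ, r))‖ ^ 2
        = ‖u‖ ^ 2 := by
      rw [aux_norm_sq u, ← Equiv.tsum_eq e'.symm
        (fun ν => ‖(u : ∀ _ : Fin d → ι, ℝ) ν‖ ^ 2)]
      exact (Summable.tsum_prod' hUsum (fun r => hUsum.prod_factor r)).symm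
    calc ‖M u‖ ^ 2 = _ := step1
      _ = _ := step2
      _ ≤ _ := step3
      _ ≤ ‖A‖ ^ 2 * ∑' r : R, ‖V r‖ ^ 2 := step4
      _ ≤ ‖A‖ ^ 2 * ∑' r : R, ∑' κ : ι, ‖(u : ∀ _ : Fin d → ι, ℝ) (e.symm (κ, r))‖ ^ 2 :=
          mul_le_mul_of_nonneg_left step5 (sq_nonneg _)
      _ = ‖A‖ ^ 2 * ‖u‖ ^ 2 := by rw [step6]
      _ = (‖A‖ * ‖u‖) ^ 2 := by ring
  have := Real.sqrt_le_sqrt hmain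
  rwa [Real.sqrt_sq (norm_nonneg _), Real.sqrt_sq (by positivity)] at this
end
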